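/- If G is a finite simple graph, then the zero forcing number Z(G) satisfies Z(G) ≤ ∑_{u ∈ V(G)} ∑_{i=0}^{d(u)} (−1)^i · ∑_{I ⊆ N(u), |I| = i} |{u} ∪ ⋃_{v∈I} N[v]|^{−1}. -/

import Mathlib

namespace SimpleGraph

variable {V : Type*}

/-- `G.ZeroForces Z v` : vertex `v` is eventually colored when starting from `Z`
and iteratively adding any vertex that is the unique uncolored neighbor of a colored vertex. -/
inductive ZeroForces (G : SimpleGraph V) (Z : Set V) : V → Prop
  | base {v : V} : v ∈ Z → ZeroForces G Z v
  | force {v u : V} : ZeroForces G Z v → G.Adj v u →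
      (∀ w, G.Adj v w → w ≠ u → ZeroForces G Z w) → ZeroForces G Z u

/-- The forcing closure `F(Z)`. -/
def zfClosure (G : SimpleGraph V) (Z : Set V) : Set V := {v | G.ZeroForces Z v}

/-- `Z` is a zero forcing set of `G`. -/
def IsZeroForcingSet (G : SimpleGraph V) (Z : Set V) : Prop := ∀ v, G.ZeroForces Z v

/-- The zero forcing number `Z(G)`. -/
noncomputable def zeroForcingNumber (G : SimpleGraph V) [Fintype V] : ℕ :=
  sInf {k | ∃ Z : Finset V, Z.card = k ∧ G.IsZeroForcingSet ↑Z}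

end SimpleGraph

open Finset Nat

section Aux

variable {V : Type*} [Fintype V] [DecidableEq V]

/-- The number of bijections `V ≃ Fin n` under which `u` is the minimum of `S`,
times `S.card`, equals `n!`. -/
private lemma aux_count (S : Finset V) (u : V) (hu : u ∈ S) :
    (univ.filter fun σ : V ≃ Fin (Fintype.card V) => ∀ w ∈ S, w ≠ u → σ u < σ w).card * S.card
      = (Fintype.card V)! := by
  classical
  -- transferring the "min at a" property along a swap
  have swaplem : ∀ (a b : V), a ∈ S → b ∈ S →
      ∀ σ : V ≃ Fin (Fintype.card V), (∀ w ∈ S, w ≠ a → σ a < σ w) →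
        ∀ w ∈ S, w ≠ b → ((Equiv.swap a b).trans σ) b < ((Equiv.swap a b).trans σ) w := by
    intro a b ha hb σ hσ w hw hwb
    rcases eq_or_ne a b with rfl | hab
    · simpa using hσ w hw hwb
    simp only [Equiv.trans_apply, Equiv.swap_apply_right]
    rcases eq_or_ne w a with rfl | hwa
    · rw [Equiv.swap_apply_left]
      exact hσ b hb (Ne.symm hab)
    · rw [Equiv.swap_apply_of_ne_of_ne hwa hwb]
      exact hσ w hw hwa
  have hcard : ∀ b ∈ S,
      (univ.filter fun σ : V ≃ Fin (Fintype.card V) => ∀ w ∈ S, w ≠ b → σ b < σ w).card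
        = (univ.filter fun σ : V ≃ Fin (Fintype.card V) => ∀ w ∈ S, w ≠ u → σ u < σ w).card := by
    intro b hb
    refine Finset.card_nbij' (fun σ => (Equiv.swap b u).trans σ)
      (fun σ => (Equiv.swap u b).trans σ) ?_ ?_ ?_ ?_
    · intro σ hσ
      rw [Finset.mem_coe, Finset.mem_filter] at hσ ⊢
      exact ⟨Finset.mem_univ _, swaplem b u hb hu σ hσ.2⟩
    · intro σ hσ
      rw [Finset.mem_coe, Finset.mem_filter] at hσ ⊢
      exact ⟨Finset.mem_univ _, swaplem u b hu hb σ hσ.2⟩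
    · intro σ _
      ext x
      simp [Equiv.swap_comm b u]
    · intro σ _
      ext x
      simp [Equiv.swap_comm b u]
  have key : ∑ b ∈ S,
      (univ.filter fun σ : V ≃ Fin (Fintype.card V) => ∀ w ∈ S, w ≠ b → σ b < σ w).card
        = (Fintype.card V)! := by
    have hmem : ∀ σ : V ≃ Fin (Fintype.card V), σ ∈ (univ : Finset (V ≃ Fin (Fintype.card V))) →
        σ.symm ((S.image σ).min' ⟨σ u, Finset.mem_image_of_mem σ hu⟩) ∈ S := by
      intro σ _
      obtain ⟨w, hwS, hw⟩ := Finset.mem_image.1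
        ((S.image σ).min'_mem ⟨σ u, Finset.mem_image_of_mem σ hu⟩)
      rw [← hw, Equiv.symm_apply_apply]
      exact hwS
    have := Finset.card_eq_sum_card_fiberwise hmem
    rw [Finset.card_univ, Fintype.card_equiv (Fintype.equivFin V)] at this
    rw [this]
    refine Finset.sum_congr rfl fun b hb => ?_
    congr 1
    refine Finset.filter_congr fun σ _ => Iff.symm ?_
    set m := (S.image σ).min' ⟨σ u, Finset.mem_image_of_mem σ hu⟩ with hm
    constructor
    · intro h w hw hwb
      have h1 : m ≤ σ w := (S.image σ).min'_le _ (Finset.mem_image_of_mem σ hw)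
      have h2 : m = σ b := by rw [← h, Equiv.apply_symm_apply]
      rw [h2] at h1
      exact lt_of_le_of_ne h1 fun he => hwb (σ.injective he.symm)
    · intro h
      obtain ⟨w₀, hw₀S, hw₀⟩ := Finset.mem_image.1 ((S.image σ).min'_mem
        ⟨σ u, Finset.mem_image_of_mem σ hu⟩)
      rcases eq_or_ne w₀ b with rfl | hne
      · rw [hm, ← hw₀, Equiv.symm_apply_apply]
      · exact absurd (((S.image σ).min'_le _ (Finset.mem_image_of_mem σ hb)).trans_lt
          (hw₀ ▸ h w₀ hw₀S hne)) (lt_irrefl _)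
  calc (univ.filter fun σ : V ≃ Fin (Fintype.card V) =>
          ∀ w ∈ S, w ≠ u → σ u < σ w).card * S.card
      = ∑ _b ∈ S, (univ.filter fun σ : V ≃ Fin (Fintype.card V) =>
          ∀ w ∈ S, w ≠ u → σ u < σ w).card := by
        rw [Finset.sum_const, smul_eq_mul, mul_comm]
    _ = ∑ b ∈ S, (univ.filter fun σ : V ≃ Fin (Fintype.card V) =>
          ∀ w ∈ S, w ≠ b → σ b < σ w).card :=
        Finset.sum_congr rfl fun b hb => (hcard b hb).symm
    _ = (Fintype.card V)! := key

/-- For any ordering `σ`, the set of vertices that are not a "local minimum witness"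
is a zero forcing set. -/
private lemma aux_forcing (G : SimpleGraph V) [DecidableRel G.Adj]
    (σ : V ≃ Fin (Fintype.card V)) :
    G.IsZeroForcingSet ↑(univ.filter fun u => ∀ v ∈ G.neighborFinset u,
      ¬ (∀ w ∈ insert v (G.neighborFinset v), w ≠ u → σ u < σ w)) := by
  classical
  set Z : Finset V := univ.filter fun u => ∀ v ∈ G.neighborFinset u,
      ¬ (∀ w ∈ insert v (G.neighborFinset v), w ≠ u → σ u < σ w) with hZ
  by_contra hcon
  rw [SimpleGraph.IsZeroForcingSet] at hcon
  push_neg at hcon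
  have hUne : (univ.filter fun v => ¬ G.ZeroForces (↑Z) v).Nonempty := by
    obtain ⟨v, hv⟩ := hcon
    exact ⟨v, Finset.mem_filter.2 ⟨Finset.mem_univ _, hv⟩⟩
  obtain ⟨u, huU, humax⟩ := Finset.exists_max_image _ (fun v => σ v) hUne
  have hunf : ¬ G.ZeroForces (↑Z) u := (Finset.mem_filter.1 huU).2
  have huZ : u ∉ Z := fun h => hunf (SimpleGraph.ZeroForces.base (by exact_mod_cast h))
  rw [hZ, Finset.mem_filter] at huZ
  push_neg at huZ
  obtain ⟨v, hv, hvmin⟩ := huZ (Finset.mem_univ u)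
  have hadjuv : G.Adj u v := (SimpleGraph.mem_neighborFinset G u v).1 hv
  have hforced : ∀ w, w ∈ insert v (G.neighborFinset v) → w ≠ u → G.ZeroForces (↑Z) w := by
    intro w hw hwu
    by_contra hwnf
    have hwU : w ∈ univ.filter fun v => ¬ G.ZeroForces (↑Z) v :=
      Finset.mem_filter.2 ⟨Finset.mem_univ _, hwnf⟩
    exact absurd (humax w hwU) (not_le_of_gt (hvmin w hw hwu))
  have hvne : v ≠ u := fun h => G.irrefl (h ▸ hadjuv)
  have hvforced : G.ZeroForces (↑Z) v := hforced v (Finset.mem_insert_self _ _) hvne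
  exact hunf (SimpleGraph.ZeroForces.force hvforced hadjuv.symm
    (fun w hw hwu => hforced w (Finset.mem_insert_of_mem ((SimpleGraph.mem_neighborFinset G v w).2 hw)) hwu))

end Aux

theorem stmt8 {V : Type*} [Fintype V] [DecidableEq V] (G : SimpleGraph V)
    [DecidableRel G.Adj] :
    (G.zeroForcingNumber : ℝ) ≤
      ∑ u : V, ∑ i ∈ Finset.range (G.degree u + 1), (-1 : ℝ) ^ i *
        ∑ I ∈ (G.neighborFinset u).powersetCard i,
          ((insert u (I.biUnion fun v => insert v (G.neighborFinset v))).card : ℝ)⁻¹ := by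
  classical
  have hfact : (0 : ℝ) < ((Fintype.card V)! : ℝ) := by
    exact_mod_cast Nat.factorial_pos _
  rw [← mul_le_mul_iff_right₀ hfact]
  -- notation
  set NS : V → Finset V → Finset V :=
    fun u I => insert u (I.biUnion fun v => insert v (G.neighborFinset v)) with hNS
  -- step 1: Z(G) ≤ |Z_σ| for every σ
  have step1 : ∀ σ : V ≃ Fin (Fintype.card V),
      (G.zeroForcingNumber : ℝ) ≤ ((univ.filter fun u => ∀ v ∈ G.neighborFinset u,
        ¬ (∀ w ∈ insert v (G.neighborFinset v), w ≠ u → σ u < σ w)).card : ℝ) := by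
    intro σ
    have : G.zeroForcingNumber ≤ (univ.filter fun u => ∀ v ∈ G.neighborFinset u,
        ¬ (∀ w ∈ insert v (G.neighborFinset v), w ≠ u → σ u < σ w)).card :=
      Nat.sInf_le ⟨_, rfl, aux_forcing G σ⟩
    exact_mod_cast this
  -- step 2: inclusion-exclusion identity, per σ and u
  have hind : ∀ (σ : V ≃ Fin (Fintype.card V)) (u : V),
      (if (∀ v ∈ G.neighborFinset u,
          ¬ (∀ w ∈ insert v (G.neighborFinset v), w ≠ u → σ u < σ w)) then (1:ℝ) else 0)
      = ∑ I ∈ (G.neighborFinset u).powerset, (-1:ℝ)^I.card *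
          (if (∀ w ∈ NS u I, w ≠ u → σ u < σ w) then 1 else 0) := by
    intro σ u
    set B : Finset V := (G.neighborFinset u).filter
      (fun v => ∀ w ∈ insert v (G.neighborFinset v), w ≠ u → σ u < σ w) with hB
    have hiff : ∀ I ∈ (G.neighborFinset u).powerset,
        ((∀ w ∈ NS u I, w ≠ u → σ u < σ w) ↔ I ⊆ B) := by
      intro I hI
      rw [Finset.mem_powerset] at hI
      constructor
      · intro h v hvI
        rw [hB, Finset.mem_filter]
        exact ⟨hI hvI, fun w hw hwu =>
          h w (Finset.mem_insert_of_mem (Finset.mem_biUnion.2 ⟨v, hvI, hw⟩)) hwu⟩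
      · intro h w hw hwu
        rcases Finset.mem_insert.1 hw with rfl | hw'
        · exact absurd rfl hwu
        · obtain ⟨v, hvI, hwv⟩ := Finset.mem_biUnion.1 hw'
          exact (Finset.mem_filter.1 (h hvI)).2 w hwv hwu
    have heq1 : ∑ I ∈ (G.neighborFinset u).powerset, (-1:ℝ)^I.card *
          (if (∀ w ∈ NS u I, w ≠ u → σ u < σ w) then 1 else 0)
        = ∑ I ∈ (G.neighborFinset u).powerset, (-1:ℝ)^I.card *
          (if I ⊆ B then 1 else 0) :=
      Finset.sum_congr rfl fun I hI => by rw [if_congr (hiff I hI) rfl rfl]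
    have hBsub : B ⊆ G.neighborFinset u := Finset.filter_subset _ _
    have heq2 : ∑ I ∈ (G.neighborFinset u).powerset, (-1:ℝ)^I.card *
          (if I ⊆ B then 1 else 0) = ∑ I ∈ B.powerset, (-1:ℝ)^I.card := by
      rw [← Finset.sum_subset (Finset.powerset_mono.2 hBsub)]
      · exact Finset.sum_congr rfl fun I hI => by
          rw [if_pos (Finset.mem_powerset.1 hI), mul_one]
      · intro I _ hIB
        rw [if_neg (fun h => hIB (Finset.mem_powerset.2 h)), mul_zero]
    have heq3 : ∑ I ∈ B.powerset, (-1:ℝ)^I.card = if B = ∅ then 1 else 0 := by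
      have h := Finset.sum_powerset_neg_one_pow_card (x := B)
      calc ∑ I ∈ B.powerset, (-1:ℝ)^I.card
          = ((∑ I ∈ B.powerset, (-1:ℤ)^I.card : ℤ) : ℝ) := by push_cast; ring_nf
        _ = ((if B = ∅ then 1 else 0 : ℤ) : ℝ) := by rw [h]
        _ = if B = ∅ then 1 else 0 := by split <;> simp
    rw [heq1, heq2, heq3]
    congr 1
    rw [eq_iff_iff, hB, Finset.filter_eq_empty_iff]
  -- the main calculation
  calc ((Fintype.card V)! : ℝ) * (G.zeroForcingNumber : ℝ)
      = ∑ _σ : V ≃ Fin (Fintype.card V), (G.zeroForcingNumber : ℝ) := by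
        rw [Finset.sum_const, Finset.card_univ, Fintype.card_equiv (Fintype.equivFin V),
          nsmul_eq_mul]
    _ ≤ ∑ σ : V ≃ Fin (Fintype.card V), ((univ.filter fun u => ∀ v ∈ G.neighborFinset u,
          ¬ (∀ w ∈ insert v (G.neighborFinset v), w ≠ u → σ u < σ w)).card : ℝ) :=
        Finset.sum_le_sum fun σ _ => step1 σ
    _ = ∑ σ : V ≃ Fin (Fintype.card V), ∑ u : V,
          (if (∀ v ∈ G.neighborFinset u,
            ¬ (∀ w ∈ insert v (G.neighborFinset v), w ≠ u → σ u < σ w)) then (1:ℝ) else 0) := by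
        refine Finset.sum_congr rfl fun σ _ => ?_
        rw [Finset.sum_boole]
    _ = ∑ σ : V ≃ Fin (Fintype.card V), ∑ u : V,
          ∑ I ∈ (G.neighborFinset u).powerset, (-1:ℝ)^I.card *
            (if (∀ w ∈ NS u I, w ≠ u → σ u < σ w) then 1 else 0) := by
        refine Finset.sum_congr rfl fun σ _ => Finset.sum_congr rfl fun u _ => hind σ u
    _ = ∑ u : V, ∑ I ∈ (G.neighborFinset u).powerset, (-1:ℝ)^I.card *
          ∑ σ : V ≃ Fin (Fintype.card V),
            (if (∀ w ∈ NS u I, w ≠ u → σ u < σ w) then (1:ℝ) else 0) := by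
        rw [Finset.sum_comm]
        refine Finset.sum_congr rfl fun u _ => ?_
        rw [Finset.sum_comm]
        refine Finset.sum_congr rfl fun I _ => ?_
        rw [Finset.mul_sum]
    _ = ∑ u : V, ∑ I ∈ (G.neighborFinset u).powerset, (-1:ℝ)^I.card *
          (((Fintype.card V)! : ℝ) * ((NS u I).card : ℝ)⁻¹) := by
        refine Finset.sum_congr rfl fun u _ => Finset.sum_congr rfl fun I _ => ?_
        congr 1
        rw [Finset.sum_boole]
        have hu : u ∈ NS u I := Finset.mem_insert_self _ _
        have hc := aux_count (NS u I) u hu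
        have hc' : ((univ.filter fun σ : V ≃ Fin (Fintype.card V) =>
            ∀ w ∈ NS u I, w ≠ u → σ u < σ w).card : ℝ) * ((NS u I).card : ℝ)
            = ((Fintype.card V)! : ℝ) := by exact_mod_cast congrArg (Nat.cast (R := ℝ)) hc
        have hcne : ((NS u I).card : ℝ) ≠ 0 := by
          have : 0 < (NS u I).card := Finset.card_pos.2 ⟨u, hu⟩
          positivity
        field_simp at hc' ⊢
        linarith [hc']
    _ = ((Fintype.card V)! : ℝ) *
        ∑ u : V, ∑ i ∈ Finset.range (G.degree u + 1), (-1 : ℝ) ^ i *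
          ∑ I ∈ (G.neighborFinset u).powersetCard i, ((NS u I).card : ℝ)⁻¹ := by
        rw [Finset.mul_sum]
        refine Finset.sum_congr rfl fun u _ => ?_
        rw [Finset.mul_sum]
        have : (G.degree u + 1) = (G.neighborFinset u).card + 1 := by
          rw [G.card_neighborFinset_eq_degree]
        rw [this]
        rw [Finset.powerset_card_disjiUnion]
        refine (Finset.sum_disjiUnion _ _ _).trans ?_
        refine Finset.sum_congr rfl fun i hi => ?_
        rw [Finset.mul_sum, Finset.mul_sum]
        refine Finset.sum_congr rfl fun I hI => ?_
        rw [(Finset.mem_powersetCard.1 hI).2]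
        ring
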